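/- Suppose λ > 0, μ > 0, λ ≠ μ, the corner equation (E) and the superposition formulas (S1), (S2) hold for all k ∈ ℤ/Nℤ, and assume that λ·e^{x̃_k−x̂_k} ≠ μ for all k. Then ∏_{k∈ℤ/Nℤ}(1+λe^{x̂̃_k−x̂_{k+1}}) = ∏_{k∈ℤ/Nℤ}(1+λe^{x̃_k−x_{k+1}}). -/

import Mathlib

/-- Key algebraic identity: ratio of plaquette factors telescopes. -/
lemma modToda_key (l m A T H W T1 H1 : ℝ) (hA : A ≠ 0) (hT : T ≠ 0) (hH : H ≠ 0)
    (hH1 : H1 ≠ 0)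
    (hS1 : (W/H - 1) * (l + A/T) = (W/T - 1) * (m + A/H))
    (hE : (T1/A - 1) * (l + A/T) = (H1/A - 1) * (m + A/H)) :
    (1 + l * (W/H1)) * (l * (T/H) - m) = (1 + l * (T/A)) * (l * (T1/H1) - m) := by
  have h1 : (W - H) * (l * T + A) * (T * H) = (W - T) * (m * H + A) * (H * T) := by
    field_simp at hS1; linear_combination (T * H) * hS1
  have h2 : (T1 - A) * (l * T + A) * (A * H) = (H1 - A) * (m * H + A) * (A * T) := by
    field_simp at hE; linear_combination A * hE
  have hS1p : (W - H) * (l*T + A) = (W - T) * (m*H + A) :=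
    mul_right_cancel₀ (mul_ne_zero hT hH) (by linear_combination h1)
  have hEp : (T1 - A) * (l*T + A) * H = (H1 - A) * (m*H + A) * T :=
    mul_right_cancel₀ hA (by linear_combination h2)
  have goal' : A * (H1 + l*W) * (l*T - m*H) = H * (A + l*T) * (l*T1 - m*H1) := by
    linear_combination l*A*hS1p - l*hEp
  field_simp
  linear_combination goal'

/-- Spectrality (closure) product identity for the modified Toda
lattice with periodic boundary conditions. -/
theorem modToda_spectrality
    (N : ℕ) [NeZero N] (x xt xh xth : ZMod N → ℝ) (lam mu : ℝ)
    (hlam : 0 < lam) (hmu : 0 < mu) (hlm : lam ≠ mu)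
    (hE : ∀ k : ZMod N,
      (Real.exp (xt k - x k) - 1) * (lam + Real.exp (x k - xt (k - 1))) =
      (Real.exp (xh k - x k) - 1) * (mu + Real.exp (x k - xh (k - 1))))
    (hS1 : ∀ k : ZMod N,
      (Real.exp (xth k - xh k) - 1) * (lam + Real.exp (x (k + 1) - xt k)) =
      (Real.exp (xth k - xt k) - 1) * (mu + Real.exp (x (k + 1) - xh k)))
    (hS2 : ∀ k : ZMod N,
      (Real.exp (xt (k + 1) - x (k + 1)) - 1) * (lam + Real.exp (xh (k + 1) - xth k)) =
      (Real.exp (xh (k + 1) - x (k + 1)) - 1) * (mu + Real.exp (xt (k + 1) - xth k)))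
    (hnd : ∀ k : ZMod N, lam * Real.exp (xt k - xh k) ≠ mu) :
    ∏ k : ZMod N, (1 + lam * Real.exp (xth k - xh (k + 1))) =
    ∏ k : ZMod N, (1 + lam * Real.exp (xt k - x (k + 1))) := by
  set F : ZMod N → ℝ := fun k => lam * Real.exp (xt k - xh k) - mu with hF
  have hFne : ∀ k, F k ≠ 0 := fun k => sub_ne_zero.mpr (hnd k)
  have claim : ∀ k : ZMod N,
      (1 + lam * Real.exp (xth k - xh (k + 1))) * F k =
      (1 + lam * Real.exp (xt k - x (k + 1))) * F (k + 1) := by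
    intro k
    have hEk := hE (k + 1)
    rw [add_sub_cancel_right] at hEk
    have hS1k := hS1 k
    simp only [hF, Real.exp_sub] at hEk hS1k ⊢
    exact modToda_key lam mu (Real.exp (x (k+1))) (Real.exp (xt k)) (Real.exp (xh k))
      (Real.exp (xth k)) (Real.exp (xt (k+1))) (Real.exp (xh (k+1)))
      (Real.exp_ne_zero _) (Real.exp_ne_zero _) (Real.exp_ne_zero _) (Real.exp_ne_zero _)
      hS1k hEk
  have hprod : (∏ k : ZMod N, (1 + lam * Real.exp (xth k - xh (k + 1)))) * ∏ k : ZMod N, F k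
      = (∏ k : ZMod N, (1 + lam * Real.exp (xt k - x (k + 1)))) * ∏ k : ZMod N, F (k + 1) := by
    rw [← Finset.prod_mul_distrib, ← Finset.prod_mul_distrib]
    exact Finset.prod_congr rfl fun k _ => claim k
  have hshift : (∏ k : ZMod N, F (k + 1)) = ∏ k : ZMod N, F k :=
    Fintype.prod_equiv (Equiv.addRight (1 : ZMod N)) _ _ (fun k => rfl)
  rw [hshift] at hprod
  exact mul_right_cancel₀ (Finset.prod_ne_zero_iff.mpr fun k _ => hFne k) hprod
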